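/- arXiv:2601.17972 — 2 statements merged into one kernel-verified Lean document; each statement's English description precedes it below -/
import Mathlib

section
/- Let $t \ge 2$ be an integer, $\Delta > 0$, and let $v : \{0, 1, \dots, t\} \to \mathbb{R}$ satisfy $v_0 = 0$ and $|v_{s+u} - v_s - v_u| \le \Delta$ for all integers $s, u \ge 1$ with $s + u \le t$. Then for every integer $1 \le s \le t$ we have $|v_s - s \cdot v_t / t| \le 3\Delta$. -/
/-- an approximately additive sequence is approximately linear. -/
theorem stmt_2 (t : ℕ) (ht : 2 ≤ t) (Δ : ℝ) (hΔ : 0 < Δ) (v : ℕ → ℝ)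
    (h0 : v 0 = 0)
    (hadd : ∀ s u : ℕ, 1 ≤ s → 1 ≤ u → s + u ≤ t → |v (s + u) - v s - v u| ≤ Δ) :
    ∀ s : ℕ, 1 ≤ s → s ≤ t → |v s - (s : ℝ) * v t / t| ≤ 3 * Δ := by
  have ht0 : (0:ℝ) < t := by positivity
  set f : ℕ → ℝ := fun s => v s - (s : ℝ) * v t / t with hf
  have hf0 : f 0 = 0 := by simp [hf, h0]
  have hft : f t = 0 := by
    simp only [hf]
    field_simp
    ring
  have haddf : ∀ s u : ℕ, 1 ≤ s → 1 ≤ u → s + u ≤ t →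
      |f (s + u) - f s - f u| ≤ Δ := by
    intro s u hs hu hsu
    have : f (s + u) - f s - f u = v (s + u) - v s - v u := by
      simp only [hf]
      push_cast
      ring
    rw [this]
    exact hadd s u hs hu hsu
  -- Lemma A: |f (q*s) - q * f s| ≤ (q-1) * Δ
  have lemA : ∀ q : ℕ, 1 ≤ q → ∀ s : ℕ, 1 ≤ s → q * s ≤ t →
      |f (q * s) - (q : ℝ) * f s| ≤ ((q : ℝ) - 1) * Δ := by
    intro q
    induction q with
    | zero => intro h; omega
    | succ k ih =>
      intro _ s hs hle
      rcases Nat.eq_zero_or_pos k with hk | hk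
      · subst hk; simp
      · have hle' : k * s + s ≤ t := by rwa [Nat.succ_mul] at hle
        have hks : k * s ≤ t := le_trans (Nat.le_add_right _ _) hle'
        have h1 := ih hk s hs hks
        have hks1 : 1 ≤ k * s := Nat.one_le_iff_ne_zero.mpr (by positivity)
        have h2 := haddf (k * s) s hks1 hs hle'
        have hq : (k + 1) * s = k * s + s := Nat.succ_mul k s
        rw [hq]
        push_cast
        have key : f (k * s + s) - ((k:ℝ) + 1) * f s =
            (f (k * s + s) - f (k * s) - f s) + (f (k * s) - (k:ℝ) * f s) := by ring
        calc |f (k * s + s) - ((k:ℝ) + 1) * f s|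
            ≤ |f (k * s + s) - f (k * s) - f s| + |f (k * s) - (k:ℝ) * f s| := by
              rw [key]; exact abs_add_le _ _
          _ ≤ Δ + ((k:ℝ) - 1) * Δ := add_le_add h2 h1
          _ = ((k:ℝ) + 1 - 1) * Δ := by ring
  -- Lemma B: for 2s ≤ t, |f s| ≤ 2Δ, by strong induction on s
  have lemB : ∀ s : ℕ, 1 ≤ s → 2 * s ≤ t → |f s| ≤ 2 * Δ := by
    intro s
    induction s using Nat.strong_induction_on with
    | _ s ih =>
      intro hs h2s
      set q := t / s with hqdef
      set r := t % s with hrdef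
      have hq2 : 2 ≤ q := Nat.le_div_iff_mul_le (by omega) |>.mpr (by omega)
      have hr : r < s := Nat.mod_lt _ (by omega)
      have heq : q * s + r = t := by
        rw [hqdef, hrdef, Nat.mul_comm]; exact Nat.div_add_mod t s
      have hqs : q * s ≤ t := heq ▸ Nat.le_add_right _ _
      have hA := lemA q (by omega) s hs hqs
      have hq2R : (2:ℝ) ≤ (q:ℝ) := by exact_mod_cast hq2
      -- |f (q*s)| ≤ 3Δ
      have hfr : |f (q * s)| ≤ 3 * Δ := by
        rcases Nat.eq_zero_or_pos r with hr0 | hr1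
        · have : q * s = t := by simpa [hr0] using heq
          rw [this, hft]
          simp
          positivity
        · have hfru : |f r| ≤ 2 * Δ := ih r hr hr1 (by omega)
          have h2 := haddf (q * s) r (Nat.one_le_iff_ne_zero.mpr (by positivity))
            hr1 heq.le
          rw [heq, hft] at h2
          have : f (q * s) = -(0 - f (q*s) - f r) - f r := by ring
          rw [this]
          calc |(-(0 - f (q*s) - f r) - f r)| ≤ |0 - f (q*s) - f r| + |f r| := by
                rw [← abs_neg (0 - f (q*s) - f r)]; exact abs_sub _ _
            _ ≤ Δ + 2 * Δ := add_le_add h2 hfru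
            _ = 3 * Δ := by ring
      -- combine: q |f s| ≤ (q-1)Δ + 3Δ = (q+2)Δ
      have hb : (q:ℝ) * |f s| ≤ ((q:ℝ) + 2) * Δ := by
        have habs : |(q:ℝ) * f s| ≤ |f (q * s)| + |f (q * s) - (q:ℝ) * f s| := by
          have h := abs_sub (f (q * s)) (f (q * s) - (q:ℝ) * f s)
          simpa [sub_sub_cancel] using h
        calc (q:ℝ) * |f s| = |(q:ℝ) * f s| := by
              rw [abs_mul, abs_of_nonneg (by positivity : (0:ℝ) ≤ (q:ℝ))]
          _ ≤ |f (q * s)| + |f (q * s) - (q:ℝ) * f s| := habs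
          _ ≤ 3 * Δ + ((q:ℝ) - 1) * Δ := add_le_add hfr hA
          _ = ((q:ℝ) + 2) * Δ := by ring
      nlinarith [abs_nonneg (f s)]
  -- finish
  intro s hs hst
  show |f s| ≤ 3 * Δ
  rcases le_or_gt (2 * s) t with h2s | h2s
  · have := lemB s hs h2s
    linarith
  · rcases eq_or_lt_of_le hst with heq | hlt
    · rw [heq, hft]; simp; positivity
    · have hu1 : 1 ≤ t - s := by omega
      have hu2 : 2 * (t - s) ≤ t := by omega
      have hfu := lemB (t - s) hu1 hu2
      have h2 := haddf s (t - s) hs hu1 (by omega)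
      have : s + (t - s) = t := by omega
      rw [this, hft] at h2
      have hrw : f s = -(0 - f s - f (t - s)) - f (t - s) := by ring
      rw [hrw]
      calc |(-(0 - f s - f (t-s)) - f (t-s))| ≤ |0 - f s - f (t-s)| + |f (t-s)| := by
            rw [← abs_neg (0 - f s - f (t-s))]; exact abs_sub _ _
        _ ≤ Δ + 2 * Δ := add_le_add h2 hfu
        _ = 3 * Δ := by ring
end

section
/- Let $(\Omega, \mathcal{F}, (\mathcal{F}_t)_{t \in \mathbb{N}}, \mathbb{P})$ be a filtered probability space, and let $M_1, \dots, M_k$ be adapted processes with values in $[0,1]$, each of which is a supermartingale with respect to $(\mathcal{F}_t)$. Suppose that for every $t \in \mathbb{N}$ there is an $\mathcal{F}_t$-measurable random index $J_t \in \{1, \dots, k\}$ such that almost surely $M_i(t+1) = M_i(t)$ for all $i \ne J_t$. Then the product process $M(t) := \prod_{j=1}^k M_j(t)$ is a supermartingale with respect to $(\mathcal{F}_t)$. -/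
open MeasureTheory ProbabilityTheory
open scoped BigOperators

/-- a product of `[0,1]`-valued supermartingales, at most one of which
(chosen measurably at time `t`) can change in each step, is a supermartingale. -/
theorem stmt_5 {Ω : Type*} {m0 : MeasurableSpace Ω} {μ : Measure Ω}
    [IsProbabilityMeasure μ] (ℱ : Filtration ℕ m0) (k : ℕ)
    (M : Fin k → ℕ → Ω → ℝ)
    (hsup : ∀ i, Supermartingale (M i) ℱ μ)
    (hbdd : ∀ i t ω, M i t ω ∈ Set.Icc (0 : ℝ) 1)
    (J : ℕ → Ω → Fin k)
    (hJmeas : ∀ t, Measurable[ℱ t] (J t))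
    (hfreeze : ∀ t, ∀ᵐ ω ∂μ, ∀ i, i ≠ J t ω → M i (t + 1) ω = M i t ω) :
    Supermartingale (fun t ω => ∏ i, M i t ω) ℱ μ := by
  -- basic facts
  have hadp : StronglyAdapted ℱ fun t ω => ∏ i, M i t ω := fun t =>
    Finset.stronglyMeasurable_fun_prod _ fun i _ => (hsup i).stronglyAdapted t
  have hprod_mem : ∀ t ω, (∏ i, M i t ω) ∈ Set.Icc (0:ℝ) 1 := fun t ω =>
    Set.mem_Icc.2 ⟨Finset.prod_nonneg fun i _ => (hbdd i t ω).1,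
      Finset.prod_le_one (fun i _ => (hbdd i t ω).1) (fun i _ => (hbdd i t ω).2)⟩
  have hint : ∀ t, Integrable (fun ω => ∏ i, M i t ω) μ := by
    intro t
    refine (integrable_const (1:ℝ)).mono'
      ((hadp t).mono (ℱ.le t)).aestronglyMeasurable ?_
    filter_upwards with ω
    rw [Real.norm_eq_abs, abs_of_nonneg (hprod_mem t ω).1]
    exact (hprod_mem t ω).2
  refine supermartingale_nat hadp hint fun t => ?_
  -- the "frozen" part
  set g : Fin k → Ω → ℝ := fun j ω => ∏ i ∈ Finset.univ.erase j, M i t ω with hg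
  set h : Fin k → Ω → ℝ := fun j => Set.indicator {ω | J t ω = j} (g j) with hh
  have hg_mem : ∀ j ω, g j ω ∈ Set.Icc (0:ℝ) 1 := fun j ω =>
    Set.mem_Icc.2 ⟨Finset.prod_nonneg fun i _ => (hbdd i t ω).1,
      Finset.prod_le_one (fun i _ => (hbdd i t ω).1) (fun i _ => (hbdd i t ω).2)⟩
  have hh_mem : ∀ j ω, h j ω ∈ Set.Icc (0:ℝ) 1 := by
    intro j ω
    by_cases hω : ω ∈ {ω | J t ω = j}
    · simpa [hh, Set.indicator_of_mem hω] using hg_mem j ω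
    · simp [hh, Set.indicator_of_notMem hω]
  have hh_sm : ∀ j, StronglyMeasurable[ℱ t] (h j) := by
    intro j
    refine StronglyMeasurable.indicator ?_ ((hJmeas t) (measurableSet_singleton j))
    exact Finset.stronglyMeasurable_fun_prod _ fun i _ => (hsup i).stronglyAdapted t
  -- decomposition of the product at time t+1
  have hdecomp : (fun ω => ∏ i, M i (t+1) ω)
      =ᵐ[μ] fun ω => ∑ j, h j ω * M j (t+1) ω := by
    filter_upwards [hfreeze t] with ω hω
    have key : ∀ j, h j ω * M j (t+1) ω
        = if J t ω = j then ∏ i, M i (t+1) ω else 0 := by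
      intro j
      by_cases hj : J t ω = j
      · have hgj : g j ω = ∏ i ∈ Finset.univ.erase j, M i (t+1) ω := by
          refine Finset.prod_congr rfl fun i hi => ?_
          exact (hω i (by simpa [hj] using (Finset.mem_erase.1 hi).1)).symm
        have hind : h j ω = g j ω :=
          Set.indicator_of_mem (show ω ∈ {ω | J t ω = j} from hj) _
        rw [if_pos hj, hind, hgj, mul_comm]
        exact Finset.mul_prod_erase Finset.univ (fun i => M i (t+1) ω)
          (Finset.mem_univ j)
      · have hind : h j ω = 0 :=
          Set.indicator_of_notMem (show ω ∉ {ω | J t ω = j} from hj) _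
        rw [if_neg hj, hind, zero_mul]
    simp only [key, Finset.sum_ite_eq Finset.univ (J t ω), Finset.mem_univ, if_true]
  -- integrability of pieces
  have hint_piece : ∀ j, Integrable (fun ω => h j ω * M j (t+1) ω) μ := by
    intro j
    refine (integrable_const (1:ℝ)).mono'
      ((((hh_sm j).mono (ℱ.le t)).mul
        (((hsup j).stronglyAdapted (t+1)).mono (ℱ.le (t+1)))).aestronglyMeasurable) ?_
    filter_upwards with ω
    rw [Real.norm_eq_abs, abs_of_nonneg (mul_nonneg (hh_mem j ω).1 (hbdd j (t+1) ω).1)]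
    exact mul_le_one₀ (hh_mem j ω).2 (hbdd j (t+1) ω).1 (hbdd j (t+1) ω).2
  -- condexp computation
  have hterm : ∀ j : Fin k, μ[fun ω => h j ω * M j (t+1) ω | ℱ t]
      ≤ᵐ[μ] fun ω => h j ω * M j t ω := by
    intro j
    have hpull : μ[fun ω => h j ω * M j (t+1) ω | ℱ t]
        =ᵐ[μ] fun ω => h j ω * (μ[M j (t+1) | ℱ t]) ω :=
      condExp_stronglyMeasurable_mul_of_bound (ℱ.le t) (hh_sm j)
        ((hsup j).integrable (t+1)) 1 (by
          filter_upwards with ω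
          rw [Real.norm_eq_abs, abs_of_nonneg (hh_mem j ω).1]
          exact (hh_mem j ω).2)
    refine hpull.trans_le ?_
    filter_upwards [(hsup j).2.1 t (t+1) (Nat.le_succ t)] with ω hω
    exact mul_le_mul_of_nonneg_left hω (hh_mem j ω).1
  calc μ[fun ω => ∏ i, M i (t+1) ω | ℱ t]
      =ᵐ[μ] μ[fun ω => ∑ j, h j ω * M j (t+1) ω | ℱ t] := condExp_congr_ae hdecomp
    _ =ᵐ[μ] fun ω => ∑ j, (μ[fun ω => h j ω * M j (t+1) ω | ℱ t]) ω := by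
        have h1 : (fun ω => ∑ j, h j ω * M j (t+1) ω)
            = ∑ j, fun ω => h j ω * M j (t+1) ω := by
          ext ω; simp [Finset.sum_apply]
        rw [h1]
        refine (condExp_finsetSum (fun j _ => hint_piece j) (m := ℱ t)).trans ?_
        filter_upwards with ω
        simp [Finset.sum_apply]
    _ ≤ᵐ[μ] fun ω => ∑ j, h j ω * M j t ω := by
        have hall : ∀ᵐ ω ∂μ, ∀ j : Fin k,
            (μ[fun ω => h j ω * M j (t+1) ω | ℱ t]) ω ≤ h j ω * M j t ω :=
          ae_all_iff.2 hterm
        filter_upwards [hall] with ω hω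
        exact Finset.sum_le_sum fun j _ => hω j
    _ =ᵐ[μ] fun ω => ∏ i, M i t ω := by
        filter_upwards with ω
        have key : ∀ j, h j ω * M j t ω = if J t ω = j then ∏ i, M i t ω else 0 := by
          intro j
          by_cases hj : J t ω = j
          · have hind : h j ω = g j ω :=
              Set.indicator_of_mem (show ω ∈ {ω | J t ω = j} from hj) _
            rw [if_pos hj, hind, mul_comm]
            exact Finset.mul_prod_erase Finset.univ (fun i => M i t ω)
              (Finset.mem_univ j)
          · have hind : h j ω = 0 :=
              Set.indicator_of_notMem (show ω ∉ {ω | J t ω = j} from hj) _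
            rw [if_neg hj, hind, zero_mul]
        simp only [key, Finset.sum_ite_eq Finset.univ (J t ω), Finset.mem_univ, if_true]
end
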